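/- There exist two computably enumerable sets that are computably inseparable: no computable set contains the first and is disjoint from the second. -/

import Mathlib

open Nat.Partrec (Code)
open Nat.Partrec.Code

private lemma mem_re {f : ℕ →. ℕ} (hf : Partrec f) (k : ℕ) :
    REPred (fun n => k ∈ f n) := by
  have hg : Computable fun p : ℕ × ℕ =>
      if p.2 = k then some () else (none : Option Unit) :=
    (Primrec.ite (Primrec.eq.comp Primrec.snd (Primrec.const k))
      (Primrec.const (some ())) (Primrec.const none)).to_comp
  have h : Partrec fun n => (f n).bind fun m =>
      ((if m = k then some () else none : Option Unit) : Part Unit) :=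
    hf.bind (hg.ofOption.to₂)
  refine h.of_eq fun n => Part.ext fun u => ?_
  simp only [Part.mem_bind_iff, Part.mem_ofOption, Part.mem_assert_iff,
    Part.mem_some_iff]
  constructor
  · rintro ⟨m, hm, hmk⟩
    split at hmk <;> simp_all
  · rintro ⟨hk, _⟩
    exact ⟨k, hk, by simp⟩

theorem exists_computably_inseparable_ce_sets :
    ∃ A B : ℕ → Prop, REPred A ∧ REPred B ∧ (∀ n, ¬ (A n ∧ B n)) ∧
      ¬ ∃ C : ℕ → Prop, ComputablePred C ∧ (∀ n, A n → C n) ∧ (∀ n, B n → ¬ C n) := by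
  classical
  set F : ℕ →. ℕ := fun n => (Denumerable.ofNat Code n).eval n with hF
  have hFp : Partrec F := eval_part.comp (Computable.ofNat _) Computable.id
  refine ⟨fun n => 0 ∈ F n, fun n => 1 ∈ F n, mem_re hFp 0, mem_re hFp 1, ?_, ?_⟩
  · rintro n ⟨h0, h1⟩
    exact absurd (Part.mem_unique h0 h1) (by norm_num)
  · rintro ⟨C, hC, hAC, hBC⟩
    obtain ⟨hdec, hcomp⟩ := hC
    have hfc : Computable fun n => if C n then 1 else 0 := by
      refine ((Computable.cond hcomp (Computable.const 1)
        (Computable.const 0))).of_eq fun n => ?_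
      by_cases h : C n <;> simp [h]
    have : Nat.Partrec fun n => Part.some (if C n then 1 else 0) :=
      Partrec.nat_iff.1 hfc.partrec
    obtain ⟨c, hc⟩ := exists_code.1 this
    set e := Encodable.encode c with he
    have hFe : F e = Part.some (if C e then 1 else 0) := by
      simp only [hF, he, Denumerable.ofNat_encode, hc]
    by_cases hCe : C e
    · exact hBC e (show 1 ∈ F e by rw [hFe, if_pos hCe]; simp) hCe
    · exact hCe (hAC e (show 0 ∈ F e by rw [hFe, if_neg hCe]; simp))
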